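/- Let V be a finite type and f : Finset V → ℝ normalized, non-decreasing, and submodular, with f({v}) > 0 for every v ∈ V, and curvature κ := κ_f. Let a : Fin n → V be injective, let A be the image of a, and for each i let A_{[i]} := {a 0, …, a (i−1)} denote the prefix of the first i elements. Then for every subset B ⊆ V, f(B) ≤ κ·f(A) + (1 − κ)·Σ_{i : a i ∈ B} f(a i | A_{[i]}) + Σ_{b ∈ B∖A} f(b | A). -/

import Mathlib

/-- Marginal gain `f(s | A) = f(A ∪ {s}) - f A`. -/
noncomputable def marg {V : Type*} [DecidableEq V] (f : Finset V → ℝ) (s : V) (A : Finset V) : ℝ :=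
  f (insert s A) - f A

/-- Submodular mutual information `I_f(a ; S) = f({a}) - f(a | S)`. -/
noncomputable def smi {V : Type*} [DecidableEq V] (f : Finset V → ℝ) (a : V) (S : Finset V) : ℝ :=
  f {a} - marg f a S

/-- Curvature `κ_f = 1 - min_{v ∈ V} (f(V) - f(V \ {v})) / f({v})`. -/
noncomputable def curvature {V : Type*} [Fintype V] [Nonempty V] [DecidableEq V]
    (f : Finset V → ℝ) : ℝ :=
  1 - Finset.univ.inf' Finset.univ_nonempty
        (fun v => (f Finset.univ - f (Finset.univ \ {v})) / f {v})

section Aux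

variable {V : Type*} [DecidableEq V]

/-- Prefix set `{a 0, …, a (k-1)}` with natural-number index. -/
def prefN {n : ℕ} (a : Fin n → V) (k : ℕ) : Finset V :=
  (Finset.univ.filter (fun j : Fin n => (j : ℕ) < k)).image a

lemma prefN_zero {n : ℕ} (a : Fin n → V) : prefN a 0 = ∅ := by
  simp [prefN]

lemma prefN_top {n : ℕ} (a : Fin n → V) : prefN a n = Finset.univ.image a := by
  unfold prefN
  rw [Finset.filter_true_of_mem (fun j _ => j.is_lt)]

lemma prefN_succ {n : ℕ} (a : Fin n → V) (i : Fin n) :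
    prefN a (i + 1) = insert (a i) (prefN a i) := by
  ext x
  simp only [prefN, Finset.mem_insert, Finset.mem_image, Finset.mem_filter, Finset.mem_univ,
    true_and]
  constructor
  · rintro ⟨j, hj, rfl⟩
    rcases Nat.lt_succ_iff_lt_or_eq.mp hj with h | h
    · exact Or.inr ⟨j, h, rfl⟩
    · exact Or.inl (by rw [Fin.ext (show (j : ℕ) = (i : ℕ) from h)])
  · rintro (rfl | ⟨j, hj, rfl⟩)
    · exact ⟨i, Nat.lt_succ_self _, rfl⟩
    · exact ⟨j, Nat.lt_succ_of_lt hj, rfl⟩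

lemma prefN_eq_filter {n : ℕ} (a : Fin n → V) (i : Fin n) :
    (Finset.univ.filter (fun j : Fin n => j < i)).image a = prefN a i := by
  unfold prefN
  congr 1

lemma not_mem_prefN {n : ℕ} (a : Fin n → V) (ha : Function.Injective a) (i : Fin n) :
    a i ∉ prefN a i := by
  simp only [prefN, Finset.mem_image, Finset.mem_filter, Finset.mem_univ, true_and]
  rintro ⟨j, hj, hja⟩
  exact absurd (ha hja ▸ hj) (lt_irrefl _)

/-- Telescoping: `f(A) = Σ_i f(a i | A_{[i]})`. -/
lemma telescope {n : ℕ} (f : Finset V → ℝ) (hnorm : f ∅ = 0) (a : Fin n → V) :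
    ∑ i : Fin n, marg f (a i) (prefN a i) = f (Finset.univ.image a) := by
  have h : ∑ i : Fin n, marg f (a i) (prefN a i)
      = ∑ k ∈ Finset.range n, (f (prefN a (k + 1)) - f (prefN a k)) := by
    rw [Finset.sum_range fun k => f (prefN a (k+1)) - f (prefN a k)]
    refine Finset.sum_congr rfl fun i _ => ?_
    rw [marg, prefN_succ]
  rw [h, Finset.sum_range_sub (fun k => f (prefN a k)), prefN_zero, prefN_top, hnorm, sub_zero]

/-- Subadditivity: `f(A ∪ S) ≤ f(A) + Σ_{b ∈ S} f(b | A)`. -/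
lemma union_le (f : Finset V → ℝ)
    (hsubmod : ∀ A B : Finset V, A ⊆ B → ∀ s : V, marg f s B ≤ marg f s A)
    (A : Finset V) : ∀ S : Finset V, f (A ∪ S) ≤ f A + ∑ b ∈ S, marg f b A := by
  intro S
  induction S using Finset.induction_on with
  | empty => simp
  | @insert b S hb ih =>
    rcases em (b ∈ A ∪ S) with h | h
    · have : A ∪ insert b S = A ∪ S := by
        rw [Finset.union_insert, Finset.insert_eq_self.mpr h]
      rw [this, Finset.sum_insert hb]
      have hnn : 0 ≤ marg f b A := by
        have := hsubmod A (A ∪ S) Finset.subset_union_left b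
        have h2 : marg f b (A ∪ S) = 0 := by
          rw [marg, Finset.insert_eq_self.mpr h, sub_self]
        linarith
      linarith
    · have : A ∪ insert b S = insert b (A ∪ S) := by rw [Finset.union_insert]
      rw [this, Finset.sum_insert hb]
      have h1 : f (insert b (A ∪ S)) = marg f b (A ∪ S) + f (A ∪ S) := by
        rw [marg]; ring
      have h2 := hsubmod A (A ∪ S) Finset.subset_union_left b
      linarith

end Aux

/-- curvature-dependent decomposition (eq. (22) of the appendix):
for any set `B` and ordered selections `a 0, …, a (n−1)` with prefixes `A_{[i]}`,
`f(B) ≤ κ·f(A) + (1 − κ)·Σ_{i : a i ∈ B} f(a i | A_{[i]}) + Σ_{b ∈ B \ A} f(b | A)`. -/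
theorem curvature_decomposition {V : Type*} [Fintype V] [Nonempty V] [DecidableEq V]
    (f : Finset V → ℝ)
    (hnorm : f ∅ = 0)
    (hmono : ∀ A B : Finset V, A ⊆ B → f A ≤ f B)
    (hsubmod : ∀ A B : Finset V, A ⊆ B → ∀ s : V, marg f s B ≤ marg f s A)
    (hpos : ∀ v : V, 0 < f {v})
    (n : ℕ) (a : Fin n → V) (ha : Function.Injective a) (B : Finset V) :
    f B ≤ curvature f * f (Finset.univ.image a)
        + (1 - curvature f) *
            ∑ i ∈ Finset.univ.filter (fun i : Fin n => a i ∈ B),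
              marg f (a i) ((Finset.univ.filter (fun j : Fin n => j < i)).image a)
        + ∑ b ∈ B \ Finset.univ.image a, marg f b (Finset.univ.image a) := by
  classical
  set κ := curvature f with hκ
  set A : Finset V := Finset.univ.image a with hA
  -- 1 - κ is the min ratio, nonnegative, and bounds each ratio.
  have hκ_def : 1 - κ = Finset.univ.inf' Finset.univ_nonempty
      (fun v => (f Finset.univ - f (Finset.univ \ {v})) / f {v}) := by
    rw [hκ, curvature]; ring
  have hκ_nonneg : 0 ≤ 1 - κ := by
    rw [hκ_def]
    apply Finset.le_inf'
    intro v _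
    apply div_nonneg _ (le_of_lt (hpos v))
    have := hmono (Finset.univ \ {v}) Finset.univ (Finset.sdiff_subset)
    linarith
  have hκ_le : ∀ v : V, (1 - κ) * f {v} ≤ marg f v (Finset.univ \ {v}) := by
    intro v
    have h1 : 1 - κ ≤ (f Finset.univ - f (Finset.univ \ {v})) / f {v} := by
      rw [hκ_def]
      exact Finset.inf'_le _ (Finset.mem_univ v)
    have h2 : insert v (Finset.univ \ {v}) = Finset.univ := by
      ext x; by_cases hx : x = v <;> simp [hx]
    rw [marg, h2]
    have := (le_div_iff₀ (hpos v)).mp h1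
    linarith
  -- marginal gain bounded by singleton value
  have hmarg_le : ∀ (i : Fin n), marg f (a i) (prefN a i) ≤ f {a i} := by
    intro i
    have := hsubmod ∅ (prefN a i) (Finset.empty_subset _) (a i)
    simpa [marg, hnorm] using this
  -- Lower bound for f (B ∪ A)
  have hlow : f B + ∑ i ∈ Finset.univ.filter (fun i : Fin n => a i ∉ B),
      marg f (a i) (Finset.univ \ {a i}) ≤ f (B ∪ A) := by
    have key : ∀ k : ℕ, k ≤ n →
        f B + ∑ i ∈ Finset.univ.filter (fun i : Fin n => (i : ℕ) < k ∧ a i ∉ B),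
          marg f (a i) (Finset.univ \ {a i}) ≤ f (B ∪ prefN a k) := by
      intro k
      induction k with
      | zero => intro _; simp [prefN_zero]
      | succ k ih =>
        intro hk
        have hkn : k < n := hk
        have ihk := ih (le_of_lt hkn)
        set i : Fin n := ⟨k, hkn⟩ with hi
        have hstep : prefN a (k + 1) = insert (a i) (prefN a k) := prefN_succ a i
        have hsplit : Finset.univ.filter (fun j : Fin n => (j : ℕ) < k + 1 ∧ a j ∉ B)
            = if a i ∈ B then Finset.univ.filter (fun j : Fin n => (j : ℕ) < k ∧ a j ∉ B)
              else insert i (Finset.univ.filter (fun j : Fin n => (j : ℕ) < k ∧ a j ∉ B)) := by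
          split_ifs with hiB
          · ext j
            simp only [Finset.mem_filter, Finset.mem_univ, true_and]
            constructor
            · rintro ⟨hj1, hj2⟩
              rcases Nat.lt_succ_iff_lt_or_eq.mp hj1 with h | h
              · exact ⟨h, hj2⟩
              · exact absurd ((Fin.ext (show (j : ℕ) = (i : ℕ) from h)) ▸ hiB) hj2
            · exact fun ⟨hj1, hj2⟩ => ⟨Nat.lt_succ_of_lt hj1, hj2⟩
          · ext j
            simp only [Finset.mem_insert, Finset.mem_filter, Finset.mem_univ, true_and]
            constructor
            · rintro ⟨hj1, hj2⟩
              rcases Nat.lt_succ_iff_lt_or_eq.mp hj1 with h | h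
              · exact Or.inr ⟨h, hj2⟩
              · exact Or.inl (Fin.ext (show (j : ℕ) = (i : ℕ) from h))
            · rintro (rfl | ⟨hj1, hj2⟩)
              · exact ⟨Nat.lt_succ_self _, hiB⟩
              · exact ⟨Nat.lt_succ_of_lt hj1, hj2⟩
        rw [hstep, Finset.union_comm B, Finset.insert_union, Finset.union_comm, hsplit]
        split_ifs with hiB
        · have hins : insert (a i) (B ∪ prefN a k) = B ∪ prefN a k := by
            rw [Finset.insert_eq_self]
            exact Finset.mem_union_left _ hiB
          rw [hins]; exact ihk
        · rw [Finset.sum_insert (by simp [hi])]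
          have hsub : B ∪ prefN a k ⊆ Finset.univ \ {a i} := by
            intro x hx
            simp only [Finset.mem_sdiff, Finset.mem_univ, Finset.mem_singleton, true_and]
            rintro rfl
            rcases Finset.mem_union.mp hx with h | h
            · exact hiB h
            · exact not_mem_prefN a ha i h
          have hm := hsubmod (B ∪ prefN a k) (Finset.univ \ {a i}) hsub (a i)
          simp only [marg] at hm ihk ⊢
          linarith
    have := key n (le_refl n)
    rw [prefN_top] at this
    have hfe : Finset.univ.filter (fun i : Fin n => (i : ℕ) < n ∧ a i ∉ B)
        = Finset.univ.filter (fun i : Fin n => a i ∉ B) := by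
      apply Finset.filter_congr
      intro i _
      simp [Fin.is_lt]
    rw [hfe] at this
    exact this
  -- Upper bound: f (B ∪ A) ≤ f A + Σ_{b ∈ B \ A} f(b | A)
  have hup : f (B ∪ A) ≤ f A + ∑ b ∈ B \ A, marg f b A := by
    have := union_le f hsubmod A (B \ A)
    have heq : A ∪ (B \ A) = B ∪ A := by
      rw [Finset.union_comm B A, Finset.union_sdiff_self_eq_union]
    rwa [heq] at this
  -- Telescoping and splitting the sum
  have htel : ∑ i : Fin n, marg f (a i) (prefN a i) = f A := telescope f hnorm a
  have hsplit : ∑ i ∈ Finset.univ.filter (fun i : Fin n => a i ∈ B),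
        marg f (a i) (prefN a i)
      + ∑ i ∈ Finset.univ.filter (fun i : Fin n => a i ∉ B),
        marg f (a i) (prefN a i)
      = f A := by
    rw [← htel]
    exact Finset.sum_filter_add_sum_filter_not _ _ _
  -- Per-element curvature bound on the not-in-B sum
  have hper : (1 - κ) * ∑ i ∈ Finset.univ.filter (fun i : Fin n => a i ∉ B),
        marg f (a i) (prefN a i)
      ≤ ∑ i ∈ Finset.univ.filter (fun i : Fin n => a i ∉ B),
        marg f (a i) (Finset.univ \ {a i}) := by
    rw [Finset.mul_sum]
    apply Finset.sum_le_sum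
    intro i _
    calc (1 - κ) * marg f (a i) (prefN a i)
        ≤ (1 - κ) * f {a i} := by
          exact mul_le_mul_of_nonneg_left (hmarg_le i) hκ_nonneg
      _ ≤ marg f (a i) (Finset.univ \ {a i}) := hκ_le (a i)
  -- rewrite the goal's filtered sum via prefN
  have hgoal_sum : ∑ i ∈ Finset.univ.filter (fun i : Fin n => a i ∈ B),
        marg f (a i) ((Finset.univ.filter (fun j : Fin n => j < i)).image a)
      = ∑ i ∈ Finset.univ.filter (fun i : Fin n => a i ∈ B),
        marg f (a i) (prefN a i) := by
    refine Finset.sum_congr rfl fun i _ => ?_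
    rw [prefN_eq_filter]
  rw [hgoal_sum]
  nlinarith [hlow, hup, hsplit, hper]
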